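/- Let (Ω, 𝔉, ℙ) be a probability space, p ∈ ℕ, and let Y, ε : Ω → ℝ, X_1, …, X_p : Ω → ℝ, T : Ω → ℝ be random variables with Y, ε and each X_j integrable. Let β ∈ ℝ^p, let f : ℝ → ℝ be measurable with f ∘ T integrable, and suppose Y = Σ_{j=1}^p β_j X_j + f(T) + ε pointwise, that ε is independent of the σ-algebra σ(T) generated by T, and that E[ε] = 0. Then, almost surely, Y − E[Y | σ(T)] = Σ_{j=1}^p β_j (X_j − E[X_j | σ(T)]) + ε. -/

import Mathlib

open MeasureTheory ProbabilityTheory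

lemma condexp_indep_zero {Ω : Type*} [MeasurableSpace Ω]
    (μ : Measure Ω) [IsProbabilityMeasure μ]
    (ε T : Ω → ℝ) (hε : Integrable ε μ) (hT : Measurable T)
    (hindep : IndepFun ε T μ) (hεmean : ∫ ω, ε ω ∂μ = 0) :
    μ[ε | MeasurableSpace.comap T Real.measurableSpace] =ᵐ[μ] 0 := by
  have hm : MeasurableSpace.comap T Real.measurableSpace ≤ (by infer_instance) :=
    hT.comap_le
  refine (ae_eq_condExp_of_forall_setIntegral_eq hm hε ?_ ?_ ?_).symm
  · intro s _ _
    exact (integrable_zero _ _ _).integrableOn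
  · rintro s ⟨t, ht, rfl⟩ _
    have hind : IndepFun ε (fun ω => Set.indicator t (fun _ => (1 : ℝ)) (T ω)) μ := by
      have := hindep.comp (φ := id) (ψ := Set.indicator t (fun _ => (1 : ℝ)))
        measurable_id (measurable_one.indicator ht)
      exact this
    have hInt : Integrable (fun ω => Set.indicator t (fun _ => (1 : ℝ)) (T ω)) μ := by
      refine Integrable.mono' (integrable_const 1) ?_ ?_
      · exact ((measurable_one.indicator ht).comp hT).aestronglyMeasurable
      · filter_upwards with ω
        simp [Set.indicator]
        split <;> simp
    have key := hind.integral_mul_eq_mul_integral hε.aestronglyMeasurable hInt.aestronglyMeasurable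
    have : ∫ ω in T ⁻¹' t, ε ω ∂μ = ∫ ω, ε ω * Set.indicator t (fun _ => (1 : ℝ)) (T ω) ∂μ := by
      rw [← integral_indicator (hT ht)]
      congr 1
      ext ω
      by_cases hω : T ω ∈ t <;> simp [Set.indicator, hω]
    symm
    rw [this]
    calc ∫ ω, ε ω * Set.indicator t (fun _ => (1 : ℝ)) (T ω) ∂μ
        = (∫ ω, ε ω ∂μ) * ∫ ω, Set.indicator t (fun _ => (1 : ℝ)) (T ω) ∂μ := key
      _ = 0 := by rw [hεmean, zero_mul]
      _ = ∫ ω in T ⁻¹' t, (0 : Ω → ℝ) ω ∂μ := by simp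
  · exact stronglyMeasurable_zero.aestronglyMeasurable

theorem partiallyLinear_reduction {Ω : Type*} [MeasurableSpace Ω]
    (μ : Measure Ω) [IsProbabilityMeasure μ] (p : ℕ)
    (Y ε T : Ω → ℝ) (X : Fin p → Ω → ℝ)
    (hY : Integrable Y μ) (hε : Integrable ε μ) (hX : ∀ j, Integrable (X j) μ)
    (β : Fin p → ℝ) (f : ℝ → ℝ) (hf : Measurable f)
    (hfT : Integrable (fun ω => f (T ω)) μ)
    (hT : Measurable T)
    (hmodel : ∀ ω, Y ω = ∑ j, β j * X j ω + f (T ω) + ε ω)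
    (hindep : IndepFun ε T μ)
    (hεmean : ∫ ω, ε ω ∂μ = 0) :
    ∀ᵐ ω ∂μ,
      Y ω - (μ[Y | MeasurableSpace.comap T Real.measurableSpace]) ω =
        ∑ j, β j *
          (X j ω - (μ[X j | MeasurableSpace.comap T Real.measurableSpace]) ω)
        + ε ω := by
  have hm := hT.comap_le
  have hTm : Measurable[(MeasurableSpace.comap T Real.measurableSpace)] T := Measurable.of_comap_le le_rfl
  have hXsum : Integrable (fun ω => ∑ j, β j * X j ω) μ :=
    integrable_finset_sum _ (fun j _ => (hX j).const_mul (β j))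
  -- condexp of Y
  have h1 : μ[Y | (MeasurableSpace.comap T Real.measurableSpace)] =ᵐ[μ]
      μ[(fun ω => ∑ j, β j * X j ω + f (T ω)) | (MeasurableSpace.comap T Real.measurableSpace)] + μ[ε | (MeasurableSpace.comap T Real.measurableSpace)] := by
    have : Y = (fun ω => ∑ j, β j * X j ω + f (T ω)) + ε := funext hmodel
    rw [this]
    exact condExp_add (hXsum.add hfT) hε _
  have h2 : μ[(fun ω => ∑ j, β j * X j ω + f (T ω)) | (MeasurableSpace.comap T Real.measurableSpace)] =ᵐ[μ]
      μ[(fun ω => ∑ j, β j * X j ω) | (MeasurableSpace.comap T Real.measurableSpace)] + μ[(fun ω => f (T ω)) | (MeasurableSpace.comap T Real.measurableSpace)] :=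
    condExp_add hXsum hfT _
  have h3 : μ[(fun ω => f (T ω)) | (MeasurableSpace.comap T Real.measurableSpace)] =ᵐ[μ] fun ω => f (T ω) := by
    exact Filter.EventuallyEq.of_eq (condExp_of_stronglyMeasurable
      (f := fun ω => f (T ω)) hm ((hf.comp hTm).stronglyMeasurable) hfT)
  have h4 : μ[(fun ω => ∑ j, β j * X j ω) | (MeasurableSpace.comap T Real.measurableSpace)] =ᵐ[μ]
      fun ω => ∑ j, β j * (μ[X j | (MeasurableSpace.comap T Real.measurableSpace)]) ω := by
    have hrw : (fun ω => ∑ j, β j * X j ω) = ∑ j, (fun ω => β j * X j ω) := by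
      ext ω; simp
    rw [hrw]
    have := condExp_finset_sum (μ := μ) (m := MeasurableSpace.comap T Real.measurableSpace) (s := Finset.univ)
      (f := fun j ω => β j * X j ω) (fun j _ => (hX j).const_mul (β j))
    refine this.trans ?_
    have hj : ∀ j : Fin p, μ[(fun ω => β j * X j ω) | (MeasurableSpace.comap T Real.measurableSpace)] =ᵐ[μ]
        fun ω => β j * (μ[X j | (MeasurableSpace.comap T Real.measurableSpace)]) ω := by
      intro j
      have := condExp_smul (μ := μ) (m := MeasurableSpace.comap T Real.measurableSpace) (β j) (X j)
      exact this
    have : ∀ᵐ ω ∂μ, ∀ j : Fin p, (μ[(fun ω => β j * X j ω) | (MeasurableSpace.comap T Real.measurableSpace)]) ω =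
        β j * (μ[X j | (MeasurableSpace.comap T Real.measurableSpace)]) ω := by
      rw [ae_all_iff]; exact hj
    filter_upwards [this] with ω hω
    simp only [Finset.sum_apply]
    exact Finset.sum_congr rfl fun j _ => hω j
  have h5 : μ[ε | (MeasurableSpace.comap T Real.measurableSpace)] =ᵐ[μ] 0 :=
    condexp_indep_zero μ ε T hε hT hindep hεmean
  filter_upwards [h1, h2, h3, h4, h5] with ω e1 e2 e3 e4 e5
  have hY' := hmodel ω
  have : (μ[Y | (MeasurableSpace.comap T Real.measurableSpace)]) ω = ∑ j, β j * (μ[X j | (MeasurableSpace.comap T Real.measurableSpace)]) ω + f (T ω) := by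
    rw [e1]
    simp only [Pi.add_apply] at *
    rw [e2, e3, e4, e5]
    simp
  rw [this, hY']
  simp only [mul_sub, Finset.sum_sub_distrib]
  ring
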